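/- If p→0 and q/p→0 (e.g. q=p²), then the random-cluster measures φ_{p,q} on a finite connected graph G converge to the uniform spanning tree measure UST, i.e. the uniform measure on the set of ω whose open edge-set is a spanning tree of G. -/

import Mathlib

open scoped BigOperators Classical

noncomputable section

/-- Number of connected components (including isolated vertices) of the graph `(V, A)`. -/
def numComp {V : Type} [Fintype V] (A : Finset (Sym2 V)) : ℕ :=
  Nat.card (SimpleGraph.fromEdgeSet (A : Set (Sym2 V))).ConnectedComponent

/-- Random-cluster weight of the configuration with open edge-set `A ⊆ E`. -/
def rcWeight {V : Type} [Fintype V] (E : Finset (Sym2 V)) (p q : ℝ)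
    (A : Finset (Sym2 V)) : ℝ :=
  p ^ A.card * (1 - p) ^ (E.card - A.card) * q ^ numComp A

/-- Random-cluster partition function. -/
def ZRC {V : Type} [Fintype V] (E : Finset (Sym2 V)) (p q : ℝ) : ℝ :=
  ∑ A ∈ E.powerset, rcWeight E p q A

/-- Potts weight `exp(β · #{monochromatic edges})` of a spin configuration `σ`. -/
def pottsWeight {V : Type} [Fintype V] [DecidableEq V] (E : Finset (Sym2 V)) (β : ℝ) (q : ℕ)
    (σ : V → Fin q) : ℝ :=
  Real.exp (β * ((E.filter (fun e => (e.map σ).IsDiag)).card : ℝ))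

/-- Potts partition function. -/
def ZP {V : Type} [Fintype V] [DecidableEq V] (E : Finset (Sym2 V)) (β : ℝ) (q : ℕ) : ℝ :=
  ∑ σ : V → Fin q, pottsWeight E β q σ

/-- The event `F`: the spin configuration `σ` is constant on every open edge of `A`. -/
def consistent {V : Type} (q : ℕ) (σ : V → Fin q) (A : Finset (Sym2 V)) : Prop :=
  ∀ e ∈ A, (e.map σ).IsDiag

/-- Weight of the Potts/random-cluster coupling measure `μ(σ, ω) ∝ ψ(σ) φ_p(ω) 1_F(σ,ω)`. -/
def muWeight {V : Type} [Fintype V] (E : Finset (Sym2 V)) (p : ℝ) (q : ℕ)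
    (σ : V → Fin q) (A : Finset (Sym2 V)) : ℝ :=
  ((q : ℝ) ^ Fintype.card V)⁻¹ * (p ^ A.card * (1 - p) ^ (E.card - A.card)) *
    (if consistent q σ A then 1 else 0)

/-- Normalising constant of the coupling measure. -/
def Zmu {V : Type} [Fintype V] [DecidableEq V] (E : Finset (Sym2 V)) (p : ℝ) (q : ℕ) : ℝ :=
  ∑ σ : V → Fin q, ∑ A ∈ E.powerset, muWeight E p q σ A

/- ### Auxiliary graph-theoretic lemmas -/

open SimpleGraph in
lemma acyclic_mono {V : Type} {G H : SimpleGraph V} (hle : G ≤ H) (h : H.IsAcyclic) :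
    G.IsAcyclic := fun _ c hc => h (c.mapLe hle) (hc.mapLe hle)

open SimpleGraph in
lemma reachable_sup_edge {V : Type} {G : SimpleGraph V} {s t x y : V} :
    (G ⊔ SimpleGraph.edge s t).Reachable x y ↔
      G.Reachable x y ∨ (G.Reachable x s ∧ G.Reachable t y) ∨
        (G.Reachable x t ∧ G.Reachable s y) := by
  constructor
  · rintro ⟨w⟩
    induction w with
    | nil => exact Or.inl (Reachable.refl _)
    | @cons a b c h p ih =>
      rcases h with h | h
      · rcases ih with h' | ⟨h1, h2⟩ | ⟨h1, h2⟩
        · exact Or.inl (h.reachable.trans h')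
        · exact Or.inr (Or.inl ⟨h.reachable.trans h1, h2⟩)
        · exact Or.inr (Or.inr ⟨h.reachable.trans h1, h2⟩)
      · rw [edge_adj] at h
        rcases h with ⟨⟨rfl, rfl⟩ | ⟨rfl, rfl⟩, hne⟩
        · rcases ih with h' | ⟨h1, h2⟩ | ⟨h1, h2⟩
          · exact Or.inr (Or.inl ⟨Reachable.refl _, h'⟩)
          · exact Or.inr (Or.inl ⟨Reachable.refl _, h2⟩)
          · exact Or.inl h2
        · rcases ih with h' | ⟨h1, h2⟩ | ⟨h1, h2⟩
          · exact Or.inr (Or.inr ⟨Reachable.refl _, h'⟩)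
          · exact Or.inl h2
          · exact Or.inr (Or.inr ⟨Reachable.refl _, h2⟩)
  · have hst' : (G ⊔ edge s t).Reachable s t := by
      by_cases h : s = t
      · subst h; exact Reachable.refl _
      · exact Adj.reachable (by simp [edge_adj, h])
    rintro (h | ⟨h1, h2⟩ | ⟨h1, h2⟩)
    · exact h.mono le_sup_left
    · exact ((h1.mono le_sup_left).trans hst').trans (h2.mono le_sup_left)
    · exact ((h1.mono le_sup_left).trans hst'.symm).trans (h2.mono le_sup_left)

open SimpleGraph in
lemma numComp_bot {V : Type} [Fintype V] :
    Nat.card ((⊥ : SimpleGraph V).ConnectedComponent) = Fintype.card V := by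
  have hbij : Function.Bijective ((⊥ : SimpleGraph V).connectedComponentMk) := by
    constructor
    · intro x y h
      exact reachable_bot.mp (ConnectedComponent.exact h)
    · exact fun c => c.exists_rep
  rw [← Nat.card_eq_fintype_card]
  exact (Nat.card_eq_of_bijective _ hbij).symm

open SimpleGraph in
lemma card_cc_sup_edge_reachable {V : Type} {G : SimpleGraph V} {s t : V}
    (h : G.Reachable s t) :
    Nat.card ((G ⊔ edge s t).ConnectedComponent) = Nat.card G.ConnectedComponent := by
  symm
  apply Nat.card_eq_of_bijective (ConnectedComponent.map (Hom.ofLE le_sup_left))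
  constructor
  · intro c d hcd
    obtain ⟨x, rfl⟩ := c.exists_rep
    obtain ⟨y, rfl⟩ := d.exists_rep
    have hr := reachable_sup_edge.mp (ConnectedComponent.exact hcd)
    apply ConnectedComponent.sound
    rcases hr with h' | ⟨h1, h2⟩ | ⟨h1, h2⟩
    · exact h'
    · exact (h1.trans h).trans h2
    · exact (h1.trans h.symm).trans h2
  · intro d
    obtain ⟨x, rfl⟩ := d.exists_rep
    exact ⟨G.connectedComponentMk x, rfl⟩

open SimpleGraph in
lemma card_cc_sup_edge_not_reachable {V : Type} [Fintype V] {G : SimpleGraph V} {s t : V}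
    (h : ¬ G.Reachable s t) :
    Nat.card ((G ⊔ edge s t).ConnectedComponent) + 1 = Nat.card G.ConnectedComponent := by
  have hst : s ≠ t := fun he => h (he ▸ Reachable.refl s)
  have hadj : (G ⊔ edge s t).Reachable s t := Adj.reachable (by simp [edge_adj, hst])
  set f : {c : G.ConnectedComponent // c ≠ G.connectedComponentMk t} →
      (G ⊔ edge s t).ConnectedComponent :=
    fun c => ConnectedComponent.map (Hom.ofLE le_sup_left) c.1 with hf
  have hbij : Function.Bijective f := by
    constructor
    · rintro ⟨c, hc⟩ ⟨d, hd⟩ hcd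
      obtain ⟨x, rfl⟩ := c.exists_rep
      obtain ⟨y, rfl⟩ := d.exists_rep
      have hr := reachable_sup_edge.mp (ConnectedComponent.exact hcd)
      apply Subtype.ext
      rcases hr with h' | ⟨h1, h2⟩ | ⟨h1, h2⟩
      · exact ConnectedComponent.sound h'
      · exact absurd (ConnectedComponent.sound h2.symm) hd
      · exact absurd (ConnectedComponent.sound h1) hc
    · intro d
      obtain ⟨x, rfl⟩ := d.exists_rep
      by_cases hx : G.connectedComponentMk x = G.connectedComponentMk t
      · refine ⟨⟨G.connectedComponentMk s, fun hs => h (ConnectedComponent.exact hs)⟩, ?_⟩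
        exact ConnectedComponent.sound
          (hadj.trans ((ConnectedComponent.exact hx).symm.mono le_sup_left))
      · exact ⟨⟨G.connectedComponentMk x, hx⟩, rfl⟩
  have h1 : Nat.card ((G ⊔ edge s t).ConnectedComponent) =
      Nat.card {c : G.ConnectedComponent // c ≠ G.connectedComponentMk t} :=
    (Nat.card_eq_of_bijective f hbij).symm
  haveI : Fintype G.ConnectedComponent := Fintype.ofFinite _
  have h2 : Fintype.card {c : G.ConnectedComponent // c ≠ G.connectedComponentMk t} =
      Fintype.card G.ConnectedComponent - 1 := by
    have := Fintype.card_subtype_compl (fun c : G.ConnectedComponent =>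
      c = G.connectedComponentMk t)
    simpa [Fintype.card_subtype_eq] using this
  have h3 : 0 < Nat.card G.ConnectedComponent := by
    have : Nonempty G.ConnectedComponent := ⟨G.connectedComponentMk t⟩
    exact Nat.card_pos
  rw [h1, Nat.card_eq_fintype_card, h2, Nat.card_eq_fintype_card] at *
  omega

open SimpleGraph in
lemma sup_edge_sdiff_edge {V : Type} {G : SimpleGraph V} {s t : V} (hns : ¬ G.Adj s t) :
    (G ⊔ edge s t) \ SimpleGraph.fromEdgeSet {s(s, t)} = G := by
  have hee : SimpleGraph.fromEdgeSet {s(s, t)} = edge s t := rfl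
  rw [hee]
  ext x y
  simp only [sdiff_adj, sup_adj, edge_adj]
  constructor
  · rintro ⟨h1 | h2, h3⟩
    · exact h1
    · exact absurd h2 h3
  · intro h
    refine ⟨Or.inl h, ?_⟩
    rintro ⟨⟨rfl, rfl⟩ | ⟨rfl, rfl⟩, -⟩
    exacts [hns h, hns h.symm]

open SimpleGraph in
lemma not_acyclic_sup_edge {V : Type} {G : SimpleGraph V} {s t : V}
    (hns : ¬ G.Adj s t) (hst : s ≠ t) (hr : G.Reachable s t) :
    ¬ (G ⊔ edge s t).IsAcyclic := by
  intro h
  have hadj : (G ⊔ edge s t).Adj s t := by simp [edge_adj, hst]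
  have hb := isAcyclic_iff_forall_adj_isBridge.mp h hadj
  rw [isBridge_iff, deleteEdges, sup_edge_sdiff_edge hns] at hb
  exact hb hr

open SimpleGraph in
lemma acyclic_sup_edge_iff {V : Type} {G : SimpleGraph V} {s t : V}
    (hns : ¬ G.Adj s t) (hnr : ¬ G.Reachable s t) :
    (G ⊔ edge s t).IsAcyclic ↔ G.IsAcyclic := by
  constructor
  · exact acyclic_mono le_sup_left
  · intro h
    rw [isAcyclic_iff_forall_adj_isBridge]
    intro x y hadj
    rcases hadj with hxy | he
    · rw [isBridge_iff]
      rw [deleteEdges]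
      have key : (G ⊔ edge s t) \ SimpleGraph.fromEdgeSet {s(x, y)} =
          (G \ SimpleGraph.fromEdgeSet {s(x, y)}) ⊔ edge s t := by
        ext a b
        simp only [sdiff_adj, sup_adj]
        constructor
        · rintro ⟨h1 | h2, h3⟩
          · exact Or.inl ⟨h1, h3⟩
          · exact Or.inr h2
        · rintro (⟨h1, h3⟩ | h2)
          · exact ⟨Or.inl h1, h3⟩
          · refine ⟨Or.inr h2, ?_⟩
            intro hmem
            rw [fromEdgeSet_adj, Set.mem_singleton_iff] at hmem
            rw [edge_adj] at h2
            obtain ⟨heq, hne⟩ := hmem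
            rcases h2 with ⟨⟨rfl, rfl⟩ | ⟨rfl, rfl⟩, -⟩
            · rw [Sym2.eq_iff] at heq
              rcases heq with ⟨rfl, rfl⟩ | ⟨rfl, rfl⟩
              exacts [hns hxy, hns hxy.symm]
            · rw [Sym2.eq_iff] at heq
              rcases heq with ⟨rfl, rfl⟩ | ⟨rfl, rfl⟩
              exacts [hns hxy.symm, hns hxy]
      rw [key]
      intro hreach
      have hbG := isAcyclic_iff_forall_adj_isBridge.mp h hxy
      rw [isBridge_iff] at hbG
      rcases reachable_sup_edge.mp hreach with h' | ⟨h1, h2⟩ | ⟨h1, h2⟩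
      · exact hbG h'
      · exact hnr (((h1.mono sdiff_le).symm.trans hxy.reachable).trans (h2.mono sdiff_le).symm)
      · exact hnr (((h2.mono sdiff_le).trans hxy.reachable.symm).trans (h1.mono sdiff_le))
    · rw [edge_adj] at he
      rw [isBridge_iff]
      rcases he with ⟨⟨rfl, rfl⟩ | ⟨rfl, rfl⟩, hne⟩
      · rw [deleteEdges]
        rw [sup_edge_sdiff_edge hns]
        exact hnr
      · rw [deleteEdges]
        have : SimpleGraph.fromEdgeSet {s(y, x)} = SimpleGraph.fromEdgeSet {s(x, y)} := by
          rw [Sym2.eq_swap]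
        rw [← this, sup_edge_sdiff_edge hns]
        intro hreach
        exact hnr hreach.symm

open SimpleGraph in
lemma main_count {V : Type} [Fintype V] (A : Finset (Sym2 V)) :
    (∀ e ∈ A, ¬ e.IsDiag) →
      Fintype.card V ≤ A.card + numComp A ∧
      (A.card + numComp A = Fintype.card V ↔
        (SimpleGraph.fromEdgeSet (A : Set (Sym2 V))).IsAcyclic) := by
  classical
  induction A using Finset.induction_on with
  | empty =>
    intro _
    have h0 : numComp (∅ : Finset (Sym2 V)) = Fintype.card V := by
      rw [numComp]
      rw [show ((∅ : Finset (Sym2 V)) : Set (Sym2 V)) = (∅ : Set (Sym2 V)) by simp,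
        fromEdgeSet_empty]
      exact numComp_bot
    rw [h0]
    refine ⟨by simp, iff_of_true (by simp) ?_⟩
    rw [show ((∅ : Finset (Sym2 V)) : Set (Sym2 V)) = (∅ : Set (Sym2 V)) by simp,
      fromEdgeSet_empty]
    exact isAcyclic_bot
  | @insert e A he ih =>
    induction e using Sym2.ind with
    | _ u v =>
      intro hnd
      have huv : u ≠ v := by
        intro hcontra
        exact hnd s(u, v) (Finset.mem_insert_self _ _) (Sym2.mk_isDiag_iff.mpr hcontra)
      have hndA : ∀ e ∈ A, ¬ e.IsDiag := fun e heA => hnd e (Finset.mem_insert_of_mem heA)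
      obtain ⟨hle, hiff⟩ := ih hndA
      have hG : SimpleGraph.fromEdgeSet ((insert s(u, v) A : Finset (Sym2 V)) : Set (Sym2 V)) =
          SimpleGraph.fromEdgeSet (A : Set (Sym2 V)) ⊔ edge u v := by
        rw [show ((insert s(u, v) A : Finset (Sym2 V)) : Set (Sym2 V)) =
          (A : Set (Sym2 V)) ∪ {s(u, v)} by rw [Finset.coe_insert, Set.insert_eq,
            Set.union_comm], fromEdgeSet_union]
        rfl
      have hcard : (insert s(u, v) A).card = A.card + 1 := Finset.card_insert_of_notMem he
      have hadj : ¬ (SimpleGraph.fromEdgeSet (A : Set (Sym2 V))).Adj u v := by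
        rw [fromEdgeSet_adj]
        rintro ⟨hmem, -⟩
        exact he (by exact_mod_cast hmem)
      by_cases hr : (SimpleGraph.fromEdgeSet (A : Set (Sym2 V))).Reachable u v
      · have hnc : numComp (insert s(u, v) A) = numComp A := by
          rw [numComp, numComp, hG]
          exact card_cc_sup_edge_reachable hr
        rw [hnc, hcard]
        refine ⟨by omega, iff_of_false (by omega) ?_⟩
        rw [hG]
        exact not_acyclic_sup_edge hadj huv hr
      · have hnc : numComp (insert s(u, v) A) + 1 = numComp A := by
          rw [numComp, numComp, hG]
          exact card_cc_sup_edge_not_reachable hr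
        have hac : (SimpleGraph.fromEdgeSet
            ((insert s(u, v) A : Finset (Sym2 V)) : Set (Sym2 V))).IsAcyclic ↔
            (SimpleGraph.fromEdgeSet (A : Set (Sym2 V))).IsAcyclic := by
          rw [hG]
          exact acyclic_sup_edge_iff hadj hr
        rw [hac, hcard]
        constructor
        · omega
        · rw [← hiff]
          omega

open SimpleGraph in
lemma connected_iff_numComp {V : Type} [Fintype V] (A : Finset (Sym2 V)) :
    (SimpleGraph.fromEdgeSet (A : Set (Sym2 V))).Connected ↔ numComp A = 1 := by
  rw [numComp, Nat.card_eq_one_iff_unique]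
  constructor
  · intro h
    exact ⟨h.preconnected.subsingleton_connectedComponent,
      h.nonempty.map (SimpleGraph.fromEdgeSet (A : Set (Sym2 V))).connectedComponentMk⟩
  · rintro ⟨hsub, hne⟩
    obtain ⟨x, -⟩ := hne.some.exists_rep
    haveI : Nonempty V := ⟨x⟩
    exact ⟨fun a b => ConnectedComponent.exact (Subsingleton.elim _ _)⟩

open SimpleGraph in
lemma isTree_iff_numComp {V : Type} [Fintype V] (A : Finset (Sym2 V))
    (hnd : ∀ e ∈ A, ¬ e.IsDiag) :
    (SimpleGraph.fromEdgeSet (A : Set (Sym2 V))).IsTree ↔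
      (numComp A = 1 ∧ A.card + numComp A = Fintype.card V) := by
  obtain ⟨hle, hiff⟩ := main_count A hnd
  constructor
  · rintro ⟨hc, ha⟩
    exact ⟨(connected_iff_numComp A).mp hc, hiff.mpr ha⟩
  · rintro ⟨h1, h2⟩
    exact ⟨(connected_iff_numComp A).mpr h1, hiff.mp h2⟩

open SimpleGraph in
lemma exists_spanning_tree {V : Type} [Fintype V] :
    ∀ (A : Finset (Sym2 V)), (∀ e ∈ A, ¬ e.IsDiag) →
      (SimpleGraph.fromEdgeSet (A : Set (Sym2 V))).Connected →
      ∃ B ⊆ A, (SimpleGraph.fromEdgeSet (B : Set (Sym2 V))).IsTree := by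
  classical
  intro A
  induction A using Finset.strongInduction with
  | _ A ih =>
    intro hnd hconn
    by_cases hac : (SimpleGraph.fromEdgeSet (A : Set (Sym2 V))).IsAcyclic
    · exact ⟨A, subset_rfl, ⟨hconn, hac⟩⟩
    · rw [isAcyclic_iff_forall_adj_isBridge] at hac
      push_neg at hac
      obtain ⟨u, v, huv, hnb⟩ := hac
      rw [isBridge_iff] at hnb
      push_neg at hnb
      have hrdel := hnb
      have hmem : s(u, v) ∈ A := by
        have := ((fromEdgeSet_adj _).mp huv).1
        exact_mod_cast this
      set A' := A.erase s(u, v) with hA'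
      have hssub : A' ⊂ A := Finset.erase_ssubset hmem
      have hG' : SimpleGraph.fromEdgeSet ((A' : Finset (Sym2 V)) : Set (Sym2 V)) =
          SimpleGraph.fromEdgeSet (A : Set (Sym2 V)) \ SimpleGraph.fromEdgeSet {s(u, v)} := by
        rw [show ((A' : Finset (Sym2 V)) : Set (Sym2 V)) = (A : Set (Sym2 V)) \ {s(u, v)} by
          simp [hA', Finset.coe_erase], fromEdgeSet_sdiff]
      have hedge_le : edge u v ≤ SimpleGraph.fromEdgeSet (A : Set (Sym2 V)) := by
        intro a b hab
        rw [edge_adj] at hab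
        rcases hab with ⟨⟨rfl, rfl⟩ | ⟨rfl, rfl⟩, -⟩
        exacts [huv, huv.symm]
      have hGdecomp : SimpleGraph.fromEdgeSet (A : Set (Sym2 V)) =
          SimpleGraph.fromEdgeSet ((A' : Finset (Sym2 V)) : Set (Sym2 V)) ⊔ edge u v := by
        rw [hG']
        exact (sdiff_sup_cancel hedge_le).symm
      have hr' : (SimpleGraph.fromEdgeSet
          ((A' : Finset (Sym2 V)) : Set (Sym2 V))).Reachable u v := by
        rw [hG']
        exact hrdel
      have hconn' : (SimpleGraph.fromEdgeSet
          ((A' : Finset (Sym2 V)) : Set (Sym2 V))).Connected := by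
        haveI : Nonempty V := hconn.nonempty
        refine ⟨fun x y => ?_⟩
        have hxy := hconn.preconnected x y
        rw [hGdecomp] at hxy
        rcases reachable_sup_edge.mp hxy with h' | ⟨h1, h2⟩ | ⟨h1, h2⟩
        · exact h'
        · exact (h1.trans hr').trans h2
        · exact (h1.trans hr'.symm).trans h2
      have hnd' : ∀ e ∈ A', ¬ e.IsDiag := fun e heA => hnd e (Finset.mem_of_mem_erase heA)
      obtain ⟨B, hB, ht⟩ := ih A' hssub hnd' hconn'
      exact ⟨B, hB.trans (Finset.erase_subset _ _), ht⟩

/- ### Auxiliary algebraic lemma -/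

lemma pow_key (p r L : ℝ) (m k N a b : ℕ) (h1 : m + k = N + a) (h2 : k = b + 1) :
    p ^ m * L * (r * p) ^ k = p ^ N * r * (p ^ a * r ^ b * L) := by
  subst h2
  have hm : m + (b + 1) = N + a := h1
  calc p ^ m * L * (r * p) ^ (b + 1)
      = p ^ (m + (b + 1)) * r ^ (b + 1) * L := by rw [mul_pow, pow_add]; ring
    _ = p ^ (N + a) * (r ^ b * r) * L := by rw [hm, pow_succ]
    _ = p ^ N * r * (p ^ a * r ^ b * L) := by rw [pow_add]; ring

/-- If `p_n → 0` and `q_n / p_n → 0`, the random-cluster measures `φ_{p_n,q_n}` on a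
finite connected graph converge (pointwise) to the uniform spanning tree measure `UST`. -/
theorem rc_limit_UST {V : Type} [Fintype V] [DecidableEq V]
    (E : Finset (Sym2 V)) (hE : ∀ e ∈ E, ¬ e.IsDiag)
    (hconn : (SimpleGraph.fromEdgeSet (E : Set (Sym2 V))).Connected)
    (pseq qseq : ℕ → ℝ)
    (hp : ∀ n, pseq n ∈ Set.Ioo (0 : ℝ) 1) (hq : ∀ n, 0 < qseq n)
    (hp0 : Filter.Tendsto pseq Filter.atTop (nhds 0))
    (hqp : Filter.Tendsto (fun n => qseq n / pseq n) Filter.atTop (nhds 0)) :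
    ∀ A ∈ E.powerset,
      Filter.Tendsto (fun n => rcWeight E (pseq n) (qseq n) A / ZRC E (pseq n) (qseq n))
        Filter.atTop
        (nhds (if (SimpleGraph.fromEdgeSet (A : Set (Sym2 V))).IsTree
          then ((E.powerset.filter
            (fun B => (SimpleGraph.fromEdgeSet (B : Set (Sym2 V))).IsTree)).card : ℝ)⁻¹
          else 0)) := by
  classical
  intro A hA
  haveI : Nonempty V := hconn.nonempty
  set N := Fintype.card V with hN
  -- basic facts about components
  have hk1 : ∀ B : Finset (Sym2 V), 1 ≤ numComp B := by
    intro B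
    have : Nonempty (SimpleGraph.fromEdgeSet (B : Set (Sym2 V))).ConnectedComponent :=
      ⟨(SimpleGraph.fromEdgeSet (B : Set (Sym2 V))).connectedComponentMk Classical.ofNonempty⟩
    exact Nat.card_pos
  have hnd : ∀ B : Finset (Sym2 V), B ∈ E.powerset → ∀ e ∈ B, ¬ e.IsDiag := by
    intro B hB e heB
    exact hE e (Finset.mem_powerset.mp hB heB)
  have hgeq : ∀ B ∈ E.powerset, N ≤ B.card + numComp B :=
    fun B hB => (main_count B (hnd B hB)).1
  -- exponents
  set a : Finset (Sym2 V) → ℕ := fun B => B.card + numComp B - N with ha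
  set b : Finset (Sym2 V) → ℕ := fun B => numComp B - 1 with hb
  set c : Finset (Sym2 V) → ℕ := fun B => E.card - B.card with hc
  set g : ℕ → Finset (Sym2 V) → ℝ :=
    fun n B => pseq n ^ a B * (qseq n / pseq n) ^ b B * (1 - pseq n) ^ c B with hg
  -- key factorization
  have key : ∀ n, ∀ B ∈ E.powerset,
      rcWeight E (pseq n) (qseq n) B = (pseq n ^ N * (qseq n / pseq n)) * g n B := by
    intro n B hB
    have hp' : pseq n ≠ 0 := ne_of_gt (hp n).1
    have h1 : B.card + numComp B = N + a B := by
      have := hgeq B hB; simp only [ha]; omega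
    have h2 : numComp B = b B + 1 := by
      have := hk1 B; simp only [hb]; omega
    calc rcWeight E (pseq n) (qseq n) B
        = pseq n ^ B.card * (1 - pseq n) ^ (E.card - B.card) *
            ((qseq n / pseq n) * pseq n) ^ numComp B := by
          simp only [rcWeight]
          rw [div_mul_cancel₀ _ hp']
      _ = pseq n ^ N * (qseq n / pseq n) *
            (pseq n ^ a B * (qseq n / pseq n) ^ b B * (1 - pseq n) ^ (E.card - B.card)) :=
          pow_key _ _ _ _ _ _ _ _ h1 h2
      _ = (pseq n ^ N * (qseq n / pseq n)) * g n B := by rw [hg]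
  -- the normalized partition function
  set S : ℕ → ℝ := fun n => ∑ B ∈ E.powerset, g n B with hS
  have keyZ : ∀ n, ZRC E (pseq n) (qseq n) = (pseq n ^ N * (qseq n / pseq n)) * S n := by
    intro n
    simp only [ZRC, hS, Finset.mul_sum]
    exact Finset.sum_congr rfl (fun B hB => key n B hB)
  -- pointwise rewriting of the ratio
  have hratio : ∀ n, rcWeight E (pseq n) (qseq n) A / ZRC E (pseq n) (qseq n)
      = g n A / S n := by
    intro n
    have hD : pseq n ^ N * (qseq n / pseq n) ≠ 0 :=
      mul_ne_zero (pow_ne_zero _ (ne_of_gt (hp n).1))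
        (ne_of_gt (div_pos (hq n) (hp n).1))
    rw [key n A hA, keyZ n, mul_div_mul_left _ _ hD]
  -- limit of each normalized weight
  have tendsto_g : ∀ B ∈ E.powerset,
      Filter.Tendsto (fun n => g n B) Filter.atTop
        (nhds (if (SimpleGraph.fromEdgeSet (B : Set (Sym2 V))).IsTree then (1 : ℝ) else 0)) := by
    intro B hB
    have h1 : Filter.Tendsto (fun n => pseq n ^ a B) Filter.atTop (nhds ((0 : ℝ) ^ a B)) :=
      hp0.pow (a B)
    have h2 : Filter.Tendsto (fun n => (qseq n / pseq n) ^ b B) Filter.atTop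
        (nhds ((0 : ℝ) ^ b B)) := hqp.pow (b B)
    have h3 : Filter.Tendsto (fun n => (1 - pseq n) ^ c B) Filter.atTop
        (nhds (((1 : ℝ) - 0) ^ c B)) := (tendsto_const_nhds.sub hp0).pow (c B)
    have hmul := (h1.mul h2).mul h3
    have htree : (SimpleGraph.fromEdgeSet (B : Set (Sym2 V))).IsTree ↔ (a B = 0 ∧ b B = 0) := by
      rw [isTree_iff_numComp B (hnd B hB)]
      have hg1 := hgeq B hB
      have hk := hk1 B
      simp only [ha, hb]
      omega
    have hval : (0 : ℝ) ^ a B * (0 : ℝ) ^ b B * ((1 : ℝ) - 0) ^ c B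
        = (if (SimpleGraph.fromEdgeSet (B : Set (Sym2 V))).IsTree then (1 : ℝ) else 0) := by
      by_cases ht : (SimpleGraph.fromEdgeSet (B : Set (Sym2 V))).IsTree
      · obtain ⟨ha0, hb0⟩ := htree.mp ht
        rw [ha0, hb0]
        simp [ht]
      · rw [if_neg ht]
        rcases (not_and_or.mp (fun hcon => ht (htree.mpr hcon))) with h0 | h0
        · rw [zero_pow h0]; ring
        · rw [zero_pow h0]; ring
    rw [hval] at hmul
    exact hmul
  -- number of spanning trees
  set T : ℕ := (E.powerset.filter
    (fun B : Finset (Sym2 V) => (SimpleGraph.fromEdgeSet (B : Set (Sym2 V))).IsTree)).card with hT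
  have hTpos : 0 < T := by
    obtain ⟨B, hBE, htB⟩ := exists_spanning_tree E hE hconn
    exact Finset.card_pos.mpr ⟨B, Finset.mem_filter.mpr ⟨Finset.mem_powerset.mpr hBE, htB⟩⟩
  have hTne : (T : ℝ) ≠ 0 := Nat.cast_ne_zero.mpr hTpos.ne'
  have tendsto_S : Filter.Tendsto S Filter.atTop (nhds (T : ℝ)) := by
    have hsum := tendsto_finset_sum E.powerset (fun B hB => tendsto_g B hB)
    have hval : ∑ B ∈ E.powerset,
        (if (SimpleGraph.fromEdgeSet (B : Set (Sym2 V))).IsTree then (1 : ℝ) else 0)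
        = (T : ℝ) := by
      rw [Finset.sum_boole, hT]
    rwa [hval] at hsum
  have final : Filter.Tendsto (fun n => g n A / S n) Filter.atTop
      (nhds ((if (SimpleGraph.fromEdgeSet (A : Set (Sym2 V))).IsTree then (1 : ℝ) else 0)
        / (T : ℝ))) := (tendsto_g A hA).div tendsto_S hTne
  refine Filter.Tendsto.congr (fun n => (hratio n).symm) ?_
  convert final using 2
  have hbind : (do let a ← E.powerset; pure ((a : Set (Sym2 V))))
      = E.powerset.image (fun B : Finset (Sym2 V) => (B : Set (Sym2 V))) :=
    Finset.sup_singleton_apply _ _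
  by_cases ht : (SimpleGraph.fromEdgeSet (A : Set (Sym2 V))).IsTree
  · rw [if_pos ht, if_pos ht, one_div]
    congr 1
    norm_cast
    rw [hbind, Finset.filter_image,
      Finset.card_image_of_injective _ (fun x y h => Finset.coe_injective h), hT]
  · rw [if_neg ht, if_neg ht, zero_div]
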